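/- Let f: [0,1] → ℝ be a continuous self-similar function with f(0) = 0, f(1) = 1, parameters c_k = 0 for all k, so that β_1 = 0, β_{k+1} - β_k = d_k, ∑_{k=1}^n d_k = 1, max_k |d_k| < 1. Let D = ∑_{k=1}^n |d_k|. Then f has bounded variation on [0,1] if and only if D ≤ 1 (equivalently D = 1), and in fact the total variation of f equals lim_{m→∞} D^m. -/

import Mathlib

open Finset Filter
open scoped ENNReal

lemma evar_scale (c b : ℝ) (f : ℝ → ℝ) (s : Set ℝ) :
    eVariationOn (fun x => c * f x + b) s = ENNReal.ofReal |c| * eVariationOn f s := by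
  rw [eVariationOn, eVariationOn, ENNReal.mul_iSup]
  apply iSup_congr
  rintro ⟨m, u, hu, us⟩
  rw [Finset.mul_sum]
  refine Finset.sum_congr rfl fun i _ => ?_
  rw [edist_dist, edist_dist, Real.dist_eq, Real.dist_eq,
    ← ENNReal.ofReal_mul (abs_nonneg c), ← abs_mul]
  congr 2
  ring

set_option maxHeartbeats 1000000 in
/-- A continuous self-similar function with `f(0) = 0`, `f(1) = 1` and `c_k = 0`
has bounded variation iff `D = ∑ |d_k| ≤ 1`, and its total variation equals
`lim_{m→∞} D^m`. -/
theorem stmt_17 (n : ℕ) (hn : 1 < n) (a d β α : ℕ → ℝ)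
    (ha : ∀ k, 1 ≤ k → k ≤ n → 0 < a k)
    (hsum : ∑ k ∈ Finset.Icc 1 n, a k = 1)
    (hα1 : α 1 = 0) (hα : ∀ k, 1 ≤ k → α (k + 1) = α k + a k)
    (hβ1 : β 1 = 0) (hβ : ∀ k, 1 ≤ k → β (k + 1) = β k + d k)
    (hd1 : ∑ k ∈ Finset.Icc 1 n, d k = 1)
    (hdmax : ∀ k, 1 ≤ k → k ≤ n → |d k| < 1)
    (f : ℝ → ℝ) (hcont : ContinuousOn f (Set.Icc 0 1))
    (hf0 : f 0 = 0) (hf1 : f 1 = 1)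
    (hfix : ∀ k, 1 ≤ k → k ≤ n → ∀ x ∈ Set.Icc (0:ℝ) 1,
      f (a k * x + α k) = d k * f x + β k) :
    (BoundedVariationOn f (Set.Icc 0 1) ↔ ∑ k ∈ Finset.Icc 1 n, |d k| ≤ 1)
    ∧ Tendsto (fun m : ℕ => ENNReal.ofReal ((∑ k ∈ Finset.Icc 1 n, |d k|) ^ m))
        atTop (nhds (eVariationOn f (Set.Icc 0 1))) := by
  set D : ℝ := ∑ k ∈ Finset.Icc 1 n, |d k| with hDdef
  set V : ℝ≥0∞ := eVariationOn f (Set.Icc 0 1) with hVdef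
  -- partial sums of α
  have hαsum : ∀ k, α (k + 1) = ∑ j ∈ Finset.Icc 1 k, a j := by
    intro k
    induction k with
    | zero => simpa using hα1
    | succ k ih =>
      rw [hα (k + 1) (by omega), ih, Finset.sum_Icc_succ_top (by omega : 1 ≤ k + 1)]
  have hαtop : α (n + 1) = 1 := by rw [hαsum n, hsum]
  have hβsum : ∀ k, β (k + 1) = ∑ j ∈ Finset.Icc 1 k, d j := by
    intro k
    induction k with
    | zero => simpa using hβ1
    | succ k ih =>
      rw [hβ (k + 1) (by omega), ih, Finset.sum_Icc_succ_top (by omega : 1 ≤ k + 1)]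
  have hβtop : β (n + 1) = 1 := by rw [hβsum n, hd1]
  have hαstep : ∀ k, 1 ≤ k → k ≤ n → α k < α (k + 1) := by
    intro k h1 h2; rw [hα k h1]; linarith [ha k h1 h2]
  have hαmono : ∀ j k, 1 ≤ j → j ≤ k → k ≤ n + 1 → α j ≤ α k := by
    intro j k hj hjk hk
    induction k with
    | zero => omega
    | succ k ih =>
      rcases Nat.eq_or_lt_of_le hjk with h | h
      · rw [h]
      · have hjk' : j ≤ k := by omega
        have h1k : 1 ≤ k := by omega
        exact le_trans (ih hjk' (by omega)) (le_of_lt (hαstep k h1k (by omega)))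
  have hα0 : ∀ k, 1 ≤ k → k ≤ n + 1 → 0 ≤ α k := by
    intro k h1 h2; rw [← hα1]; exact hαmono 1 k le_rfl h1 h2
  have hα1' : ∀ k, 1 ≤ k → k ≤ n + 1 → α k ≤ 1 := by
    intro k h1 h2; rw [← hαtop]; exact hαmono k (n + 1) h1 h2 le_rfl
  -- Lemma A : variation on each subinterval
  have hA : ∀ k, 1 ≤ k → k ≤ n →
      eVariationOn f (Set.Icc (α k) (α (k + 1))) = ENNReal.ofReal |d k| * V := by
    intro k h1 h2
    have hak := ha k h1 h2
    have himg : (fun x => a k * x + α k) '' Set.Icc 0 1 = Set.Icc (α k) (α (k + 1)) := by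
      rw [show (fun x => a k * x + α k) = (a k * · + α k) from rfl,
        Set.image_affine_Icc' hak, hα k h1]
      rw [mul_zero, zero_add, mul_one, add_comm]
    have hmono : MonotoneOn (fun x => a k * x + α k) (Set.Icc (0:ℝ) 1) := by
      intro x _ y _ hxy
      have := mul_le_mul_of_nonneg_left hxy (le_of_lt hak)
      dsimp only; linarith
    rw [← himg, ← eVariationOn.comp_eq_of_monotoneOn f _ hmono]
    have heq := eVariationOn.eq_of_eqOn (s := Set.Icc (0:ℝ) 1)
      (f := f ∘ fun x => a k * x + α k) (f' := fun x => d k * f x + β k)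
      (fun x hx => hfix k h1 h2 x hx)
    rw [heq, evar_scale]
  -- Lemma B : additivity
  have hB : V = ∑ k ∈ Finset.Icc 1 n, eVariationOn f (Set.Icc (α k) (α (k + 1))) := by
    have key : ∀ k, k ≤ n → eVariationOn f (Set.Icc 0 (α (k + 1)))
        = ∑ j ∈ Finset.Icc 1 k, eVariationOn f (Set.Icc (α j) (α (j + 1))) := by
      intro k
      induction k with
      | zero =>
        intro _
        simp only [Nat.zero_add, hα1, Finset.Icc_self]
        rw [Set.Icc_self]
        simp [eVariationOn.subsingleton f (Set.subsingleton_singleton (a := (0:ℝ)))]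
      | succ k ih =>
        intro hk
        have h0k : (0:ℝ) ≤ α (k + 1) := hα0 (k + 1) (by omega) (by omega)
        have hkk : α (k + 1) ≤ α (k + 1 + 1) := le_of_lt (hαstep (k + 1) (by omega) hk)
        have hadd := eVariationOn.Icc_add_Icc f (s := Set.univ) h0k hkk (Set.mem_univ _)
        simp only [Set.univ_inter] at hadd
        rw [← hadd, ih (by omega), Finset.sum_Icc_succ_top (by omega : 1 ≤ k + 1)]
    rw [hVdef, show (1:ℝ) = α (n + 1) from hαtop.symm, key n le_rfl]
  have hDV : V = ENNReal.ofReal D * V :=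
    calc V = ∑ k ∈ Finset.Icc 1 n, eVariationOn f (Set.Icc (α k) (α (k + 1))) := hB
    _ = ∑ k ∈ Finset.Icc 1 n, ENNReal.ofReal |d k| * V :=
        Finset.sum_congr rfl fun k hk => hA k (Finset.mem_Icc.mp hk).1 (Finset.mem_Icc.mp hk).2
    _ = (∑ k ∈ Finset.Icc 1 n, ENNReal.ofReal |d k|) * V := by rw [Finset.sum_mul]
    _ = ENNReal.ofReal D * V := by
        rw [hDdef, ENNReal.ofReal_sum_of_nonneg (fun k _ => abs_nonneg (d k))]
  have hV1 : (1 : ℝ≥0∞) ≤ V := by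
    have h0 : (0:ℝ) ∈ Set.Icc (0:ℝ) 1 := by norm_num
    have h1 : (1:ℝ) ∈ Set.Icc (0:ℝ) 1 := by norm_num
    have := eVariationOn.edist_le f h1 h0
    rw [hf1, hf0, edist_dist, Real.dist_eq] at this
    simpa using this
  have hD1 : (1:ℝ) ≤ D := by
    rw [hDdef, ← hd1]
    exact Finset.sum_le_sum fun i _ => le_abs_self (d i)
  by_cases hD : D ≤ 1
  · -- D = 1, monotone case
    have hDeq : D = 1 := le_antisymm hD hD1
    have hVeq : V = 1 := by
      have hdpos : ∀ k, 1 ≤ k → k ≤ n → 0 ≤ d k := by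
        have h0 : ∑ k ∈ Finset.Icc 1 n, (|d k| - d k) = 0 := by
          rw [Finset.sum_sub_distrib, hd1, ← hDdef, hDeq]; ring
        intro k h1 h2
        have h3 := (Finset.sum_eq_zero_iff_of_nonneg
          (fun i _ => sub_nonneg.mpr (le_abs_self (d i)))).mp h0 k (Finset.mem_Icc.mpr ⟨h1, h2⟩)
        have habs := abs_nonneg (d k)
        linarith
      have hβmono : ∀ j k, 1 ≤ j → j ≤ k → k ≤ n + 1 → β j ≤ β k := by
        intro j k hj hjk hk
        induction k with
        | zero => omega
        | succ k ih =>
          rcases Nat.eq_or_lt_of_le hjk with h | h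
          · rw [h]
          · have h1k : 1 ≤ k := by omega
            have hstep : β k ≤ β (k + 1) := by
              rw [hβ k h1k]; linarith [hdpos k h1k (by omega)]
            exact le_trans (ih (by omega) (by omega)) hstep
      have hβ0 : ∀ k, 1 ≤ k → k ≤ n + 1 → 0 ≤ β k := by
        intro k h1 h2; rw [← hβ1]; exact hβmono 1 k le_rfl h1 h2
      have hβ1' : ∀ k, 1 ≤ k → k ≤ n + 1 → β k ≤ 1 := by
        intro k h1 h2; rw [← hβtop]; exact hβmono k (n + 1) h1 h2 le_rfl
      have hcover : ∀ x ∈ Set.Icc (0:ℝ) 1,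
          ∃ k, 1 ≤ k ∧ k ≤ n ∧ α k ≤ x ∧ x ≤ α (k + 1) ∧ (k < n → x < α (k + 1)) := by
        intro x hx
        have hne : ((Finset.Icc 1 n).filter (fun k => α k ≤ x)).Nonempty := by
          refine ⟨1, ?_⟩
          simp only [Finset.mem_filter, Finset.mem_Icc]
          exact ⟨⟨le_rfl, by omega⟩, by rw [hα1]; exact hx.1⟩
        set k := ((Finset.Icc 1 n).filter (fun k => α k ≤ x)).max' hne with hkdef
        have hkmem := Finset.max'_mem _ hne
        rw [← hkdef] at hkmem
        simp only [Finset.mem_filter, Finset.mem_Icc] at hkmem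
        have h1k : 1 ≤ k := hkmem.1.1
        have hkn : k ≤ n := hkmem.1.2
        have hlt : k < n → x < α (k + 1) := by
          intro hklt
          by_contra hcon
          push_neg at hcon
          have hmem2 : k + 1 ∈ (Finset.Icc 1 n).filter (fun k => α k ≤ x) := by
            simp only [Finset.mem_filter, Finset.mem_Icc]; exact ⟨⟨by omega, by omega⟩, hcon⟩
          have := Finset.le_max' _ _ hmem2
          omega
        refine ⟨k, h1k, hkn, hkmem.2, ?_, hlt⟩
        rcases Nat.lt_or_ge k n with h | h
        · exact le_of_lt (hlt h)
        · have hkeq : k = n := le_antisymm hkn h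
          rw [hkeq, hαtop]; exact hx.2
      have hrepr : ∀ k, 1 ≤ k → k ≤ n → ∀ x, α k ≤ x → x ≤ α (k + 1) →
          ∃ u ∈ Set.Icc (0:ℝ) 1, x = a k * u + α k ∧ f x = d k * f u + β k := by
        intro k h1 h2 x hx1 hx2
        have hak := ha k h1 h2
        have hu1 : 0 ≤ (x - α k) / a k := div_nonneg (by linarith) hak.le
        have hu2 : (x - α k) / a k ≤ 1 := by
          rw [div_le_one hak]; rw [hα k h1] at hx2; linarith
        have hxu : x = a k * ((x - α k) / a k) + α k := by field_simp; ring
        exact ⟨_, ⟨hu1, hu2⟩, hxu, by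
          nth_rewrite 1 [hxu]; exact hfix k h1 h2 _ ⟨hu1, hu2⟩⟩
      obtain ⟨xm, hxm, hminf⟩ := isCompact_Icc.exists_isMinOn
        (Set.nonempty_Icc.mpr zero_le_one) hcont
      obtain ⟨xM, hxMm, hmaxf⟩ := isCompact_Icc.exists_isMaxOn
        (Set.nonempty_Icc.mpr zero_le_one) hcont
      have hm0 : 0 ≤ f xm := by
        obtain ⟨k, h1, h2, hx1, hx2, -⟩ := hcover xm hxm
        obtain ⟨u, hu, -, hfu⟩ := hrepr k h1 h2 xm hx1 hx2
        have h3 : f xm ≤ f u := isMinOn_iff.mp hminf u hu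
        have h4 := hdpos k h1 h2
        have h5 := hβ0 k h1 (by omega)
        have h6 : d k < 1 := lt_of_le_of_lt (le_abs_self _) (hdmax k h1 h2)
        nlinarith [mul_le_mul_of_nonneg_left h3 h4]
      have hM1 : f xM ≤ 1 := by
        obtain ⟨k, h1, h2, hx1, hx2, -⟩ := hcover xM hxMm
        obtain ⟨u, hu, -, hfu⟩ := hrepr k h1 h2 xM hx1 hx2
        have h3 : f u ≤ f xM := isMaxOn_iff.mp hmaxf u hu
        have h4 := hdpos k h1 h2
        have h5 : β k + d k ≤ 1 := by
          rw [← hβ k h1]; exact hβ1' (k + 1) (by omega) (by omega)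
        have h6 : d k < 1 := lt_of_le_of_lt (le_abs_self _) (hdmax k h1 h2)
        nlinarith [mul_le_mul_of_nonneg_left h3 h4]
      have hf01 : ∀ x ∈ Set.Icc (0:ℝ) 1, 0 ≤ f x ∧ f x ≤ 1 := fun x hx =>
        ⟨le_trans hm0 (isMinOn_iff.mp hminf x hx), le_trans (isMaxOn_iff.mp hmaxf x hx) hM1⟩
      have hlocal : ∀ k, 1 ≤ k → k ≤ n → ∀ x, α k ≤ x → x ≤ α (k + 1) →
          β k ≤ f x ∧ f x ≤ β (k + 1) := by
        intro k h1 h2 x hx1 hx2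
        obtain ⟨u, hu, -, hfu⟩ := hrepr k h1 h2 x hx1 hx2
        have h4 := hdpos k h1 h2
        obtain ⟨hu0, hu1⟩ := hf01 u hu
        rw [hβ k h1]
        constructor <;> nlinarith
      set K : Set (ℝ × ℝ) := (Set.Icc (0:ℝ) 1 ×ˢ Set.Icc (0:ℝ) 1) ∩ {p : ℝ × ℝ | p.1 ≤ p.2}
        with hKdef
      have hKcpt : IsCompact K := (isCompact_Icc.prod isCompact_Icc).inter_right
        (isClosed_le continuous_fst continuous_snd)
      have hK00 : ((0:ℝ), (0:ℝ)) ∈ K :=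
        ⟨⟨⟨le_rfl, zero_le_one⟩, ⟨le_rfl, zero_le_one⟩⟩, by simp⟩
      have hgcont : ContinuousOn (fun p : ℝ × ℝ => f p.1 - f p.2) K := by
        apply ContinuousOn.sub
        · exact hcont.comp continuous_fst.continuousOn (fun p hp => hp.1.1)
        · exact hcont.comp continuous_snd.continuousOn (fun p hp => hp.1.2)
      obtain ⟨⟨x, y⟩, hxyK, hmaxg⟩ := hKcpt.exists_isMaxOn ⟨((0:ℝ), (0:ℝ)), hK00⟩ hgcont
      have hMdef : ∀ p ∈ K, f p.1 - f p.2 ≤ f x - f y := fun p hp => isMaxOn_iff.mp hmaxg p hp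
      have hM0 : 0 ≤ f x - f y := by
        have h := hMdef ((0:ℝ), (0:ℝ)) hK00
        simp only at h
        linarith
      have hx01 : x ∈ Set.Icc (0:ℝ) 1 := hxyK.1.1
      have hy01 : y ∈ Set.Icc (0:ℝ) 1 := hxyK.1.2
      have hxley : x ≤ y := hxyK.2
      have hMneg : f x - f y ≤ 0 := by
        obtain ⟨kx, hkx1, hkx2, hax1, hax2, haxlt⟩ := hcover x hx01
        obtain ⟨ky, hky1, hky2, hay1, hay2, haylt⟩ := hcover y hy01
        have hkxky : kx ≤ ky := by
          by_contra hcon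
          push_neg at hcon
          have hkyn : ky < n := by omega
          have hylt := haylt hkyn
          have h2 : α (ky + 1) ≤ α kx := hαmono (ky + 1) kx (by omega) (by omega) (by omega)
          linarith
        rcases Nat.eq_or_lt_of_le hkxky with he | hltk
        · obtain ⟨u, hu, hxu, hfxu⟩ := hrepr kx hkx1 hkx2 x hax1 hax2
          obtain ⟨v, hv, hyv, hfyv⟩ := hrepr kx hkx1 hkx2 y (by rw [he]; exact hay1)
            (by rw [he]; exact hay2)
          have hak := ha kx hkx1 hkx2
          have huv : u ≤ v := by
            by_contra hc; push_neg at hc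
            have := mul_lt_mul_of_pos_left hc hak
            nlinarith [hxu ▸ hyv ▸ hxley]
          have h5 : f u - f v ≤ f x - f y := hMdef (u, v) ⟨⟨hu, hv⟩, huv⟩
          have h4 := hdpos kx hkx1 hkx2
          have h6 : d kx < 1 := lt_of_le_of_lt (le_abs_self _) (hdmax kx hkx1 hkx2)
          nlinarith [mul_le_mul_of_nonneg_left h5 h4]
        · have h7 := (hlocal kx hkx1 hkx2 x hax1 hax2).2
          have h8 := (hlocal ky hky1 hky2 y hay1 hay2).1
          have h9 : β (kx + 1) ≤ β ky := hβmono (kx + 1) ky (by omega) (by omega) (by omega)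
          linarith
      have hmono : MonotoneOn f (Set.Icc (0:ℝ) 1) := by
        intro p hp q hq hpq
        have h : f p - f q ≤ f x - f y := hMdef (p, q) ⟨⟨hp, hq⟩, hpq⟩
        linarith
      have hVle : V ≤ 1 := by
        have h01 : (0:ℝ) ∈ Set.Icc (0:ℝ) 1 := ⟨le_rfl, zero_le_one⟩
        have h11 : (1:ℝ) ∈ Set.Icc (0:ℝ) 1 := ⟨zero_le_one, le_rfl⟩
        have h := hmono.eVariationOn_le h01 h11
        rw [Set.inter_self, hf1, hf0, show (1:ℝ) - 0 = 1 by norm_num,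
          ENNReal.ofReal_one] at h
        rw [hVdef]
        exact h
      exact le_antisymm hVle hV1
    refine ⟨⟨fun _ => hD, fun _ => ?_⟩, ?_⟩
    · have : eVariationOn f (Set.Icc (0:ℝ) 1) ≠ ⊤ := by
        rw [← hVdef, hVeq]; exact ENNReal.one_ne_top
      exact this
    · rw [hDeq, hVeq]
      simp only [one_pow, ENNReal.ofReal_one]
      exact tendsto_const_nhds
  · have hDgt : 1 < D := lt_of_not_ge hD
    have hVtop : V = ⊤ := by
      by_contra hV
      have h1 : (1:ℝ≥0∞) < ENNReal.ofReal D := by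
        rw [← ENNReal.ofReal_one]
        exact (ENNReal.ofReal_lt_ofReal_iff (by linarith)).mpr hDgt
      have hV0 : V ≠ 0 := by
        intro h; rw [h] at hV1; simp at hV1
      have hlt : V < ENNReal.ofReal D * V := by
        conv_lhs => rw [← one_mul V]
        rw [mul_comm 1 V, mul_comm _ V]; exact ENNReal.mul_lt_mul_right hV0 hV h1
      rw [← hDV] at hlt
      exact lt_irrefl _ hlt
    refine ⟨⟨fun hBV => absurd (hVdef.symm.trans hVtop) hBV, fun h => absurd h hD⟩, ?_⟩
    rw [hVtop]
    exact ENNReal.tendsto_ofReal_atTop.comp (tendsto_pow_atTop_atTop_of_one_lt hDgt)
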